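/- Let W be any Kripke frame and let [2] be the two-element reflexive chain. If f, g : [2] → W are p-morphisms with f(1) = g(1), then f = g. -/
import Mathlib

/-- A p-morphism between Kripke frames `(W, rW)` and `(V, rV)`:
a function that is stable and open. -/
def IsPMorphism {W V : Type*} (rW : W → W → Prop) (rV : V → V → Prop) (f : W → V) : Prop :=
  (∀ ⦃w w'⦄, rW w w' → rV (f w) (f w')) ∧
  (∀ w v', rV (f w) v' → ∃ w', rW w w' ∧ f w' = v')

/-- The two-element reflexive chain `[2]`, realized as `Fin 2` with `i ≺ j ↔ i ≤ j`
(so `0` plays the role of the root `1` of `{1, 2}`). -/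
def chainRel2 : Fin 2 → Fin 2 → Prop := (· ≤ ·)

/-- For any Kripke frame `W`, two p-morphisms `f, g : [2] → W` from
the two-element reflexive chain that agree on the root are equal. -/
theorem statement12 {W : Type*} (rW : W → W → Prop) (f g : Fin 2 → W)
    (hf : IsPMorphism chainRel2 rW f) (hg : IsPMorphism chainRel2 rW g)
    (h : f 0 = g 0) :
    f = g := by
  obtain ⟨hfs, hfo⟩ := hf
  obtain ⟨hgs, hgo⟩ := hg
  have h01 : chainRel2 0 1 := by unfold chainRel2; decide
  have key : f 1 = g 1 := by
    have r : rW (g 0) (f 1) := h ▸ hfs h01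
    obtain ⟨w', hw', hgw'⟩ := hgo 0 (f 1) r
    fin_cases w'
    · -- g 0 = f 1, so f 0 = f 1
      have r2 : rW (f 1) (g 1) := by
        have := hgs h01
        rwa [← hgw']
      obtain ⟨w'', hw'', hfw''⟩ := hfo 1 (g 1) r2
      fin_cases w''
      · exact absurd hw'' (by unfold chainRel2; decide)
      · exact hfw''
    · exact hgw'.symm
  funext i
  fin_cases i
  · exact h
  · exact key
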